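/- For every k ≥ 1, every finite point set S ⊂ ℝ² can be colored with 2k−1 colors so that every bottomless rectangle containing at most k points of S contains no color twice. -/

import Mathlib

/-- Membership in the bottomless rectangle `{(x,y) : a ≤ x ≤ b, y ≤ c}`. -/
def InBottomless (a b c : ℝ) (p : ℝ × ℝ) : Prop :=
  a ≤ p.1 ∧ p.1 ≤ b ∧ p.2 ≤ c

noncomputable instance (a b c : ℝ) :
    DecidablePred (fun p : ℝ × ℝ => InBottomless a b c p) := by
  unfold InBottomless; infer_instance

open Classical in
/-- Points of `S` below `p` that are among the `k-1` nearest to `p.1`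
(in x) on their side, among points below `p`. -/
noncomputable def Nset (k : ℕ) (S : Finset (ℝ × ℝ)) (p : ℝ × ℝ) : Finset (ℝ × ℝ) :=
  S.filter (fun q => q.2 < p.2 ∧
    (S.filter (fun r => r.2 < p.2 ∧
      ((q.1 < r.1 ∧ r.1 < p.1) ∨ (p.1 < r.1 ∧ r.1 < q.1)))).card + 2 ≤ k)

open Classical in
lemma Nset_measure {k : ℕ} {S : Finset (ℝ × ℝ)} {p q : ℝ × ℝ}
    (hq : q ∈ Nset k S p) :
    (S.filter (fun r => r.2 < q.2)).card < (S.filter (fun r => r.2 < p.2)).card := by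
  simp only [Nset, Finset.mem_filter] at hq
  obtain ⟨hqS, hqy, -⟩ := hq
  apply Finset.card_lt_card
  constructor
  · intro r hr
    simp only [Finset.mem_filter] at hr ⊢
    exact ⟨hr.1, hr.2.trans hqy⟩
  · intro hsub
    have := hsub (Finset.mem_filter.2 ⟨hqS, hqy⟩)
    simp only [Finset.mem_filter] at this
    exact absurd this.2 (lt_irrefl _)

open Classical in
noncomputable def chi (k : ℕ) (hk : 1 ≤ k) (S : Finset (ℝ × ℝ)) (p : ℝ × ℝ) :
    Fin (2 * k - 1) :=
  if h : ((Finset.univ : Finset (Fin (2 * k - 1))) \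
      ((Nset k S p).attach.image (fun q => chi k hk S q.1))).Nonempty then
    h.choose
  else ⟨0, by omega⟩
termination_by (S.filter (fun r => r.2 < p.2)).card
decreasing_by all_goals exact Nset_measure q.2

open Classical in
lemma count_succ_le {S : Finset (ℝ × ℝ)} {p q q' : ℝ × ℝ}
    (hq'S : q' ∈ S) (hy' : q'.2 < p.2)
    (hbet : (q.1 < q'.1 ∧ q'.1 < p.1) ∨ (p.1 < q'.1 ∧ q'.1 < q.1)) :
    (S.filter (fun r => r.2 < p.2 ∧
      ((q'.1 < r.1 ∧ r.1 < p.1) ∨ (p.1 < r.1 ∧ r.1 < q'.1)))).card + 1 ≤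
    (S.filter (fun r => r.2 < p.2 ∧
      ((q.1 < r.1 ∧ r.1 < p.1) ∨ (p.1 < r.1 ∧ r.1 < q.1)))).card := by
  set T' := S.filter (fun r => r.2 < p.2 ∧
      ((q'.1 < r.1 ∧ r.1 < p.1) ∨ (p.1 < r.1 ∧ r.1 < q'.1))) with hT'
  have hq'T' : q' ∉ T' := by
    simp only [hT', Finset.mem_filter]
    rintro ⟨-, -, ⟨h1, -⟩ | ⟨-, h2⟩⟩ <;> linarith
  have hsub : insert q' T' ⊆ S.filter (fun r => r.2 < p.2 ∧
      ((q.1 < r.1 ∧ r.1 < p.1) ∨ (p.1 < r.1 ∧ r.1 < q.1))) := by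
    intro r hr
    rcases Finset.mem_insert.1 hr with rfl | hr
    · exact Finset.mem_filter.2 ⟨hq'S, hy', hbet⟩
    · simp only [hT', Finset.mem_filter] at hr ⊢
      refine ⟨hr.1, hr.2.1, ?_⟩
      rcases hr.2.2 with ⟨h1, h2⟩ | ⟨h1, h2⟩ <;> rcases hbet with ⟨b1, b2⟩ | ⟨b1, b2⟩
      · exact Or.inl ⟨by linarith, h2⟩
      · exact absurd h2 (by linarith)
      · exact absurd h1 (by linarith)
      · exact Or.inr ⟨h1, by linarith⟩
  calc T'.card + 1 = (insert q' T').card := (Finset.card_insert_of_notMem hq'T').symm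
    _ ≤ _ := Finset.card_le_card hsub

open Classical in
lemma card_Nset_le {k : ℕ} (hk : 1 ≤ k) {S : Finset (ℝ × ℝ)}
    (hx : Set.InjOn Prod.fst (S : Set (ℝ × ℝ))) {p : ℝ × ℝ} (hp : p ∈ S) :
    (Nset k S p).card ≤ 2 * k - 2 := by
  have h := Finset.card_le_card_of_injOn
    (f := fun q : ℝ × ℝ => ((decide (q.1 < p.1) : Bool),
      (S.filter (fun r => r.2 < p.2 ∧
        ((q.1 < r.1 ∧ r.1 < p.1) ∨ (p.1 < r.1 ∧ r.1 < q.1)))).card))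
    (s := Nset k S p)
    (t := (Finset.univ : Finset Bool) ×ˢ Finset.range (k - 1))
    ?_ ?_
  · have : ((Finset.univ : Finset Bool) ×ˢ Finset.range (k - 1)).card = 2 * (k - 1) := by
      rw [Finset.card_product, Finset.card_univ, Finset.card_range]; simp
    omega
  · intro q hq
    simp only [Nset, Finset.mem_coe, Finset.mem_filter] at hq
    simp only [Finset.mem_coe, Finset.mem_product, Finset.mem_univ, Finset.mem_range, true_and]
    omega
  · intro q hq q' hq' hfeq
    by_contra hne
    simp only [Nset, Finset.mem_coe, Finset.mem_filter] at hq hq'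
    have hqp : q ≠ p := by
      rintro rfl; exact lt_irrefl _ hq.2.1
    have hq'p : q' ≠ p := by
      rintro rfl; exact lt_irrefl _ hq'.2.1
    have hxq : q.1 ≠ q'.1 := fun h => hne (hx hq.1 hq'.1 h)
    have hxqp : q.1 ≠ p.1 := fun h => hqp (hx hq.1 hp h)
    have hxq'p : q'.1 ≠ p.1 := fun h => hq'p (hx hq'.1 hp h)
    simp only [Prod.mk.injEq, decide_eq_decide] at hfeq
    obtain ⟨hside, hcnt⟩ := hfeq
    rcases lt_trichotomy q.1 q'.1 with hlt | heq | hgt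
    · by_cases hl : q.1 < p.1
      · have := count_succ_le (p := p) (q := q) (q' := q')
          hq'.1 hq'.2.1 (Or.inl ⟨hlt, hside.mp hl⟩)
        omega
      · have hgp : p.1 < q.1 := lt_of_le_of_ne (not_lt.1 hl) (Ne.symm hxqp)
        have := count_succ_le (p := p) (q := q') (q' := q)
          hq.1 hq.2.1 (Or.inr ⟨hgp, hlt⟩)
        omega
    · exact hxq heq
    · by_cases hl : q'.1 < p.1
      · have := count_succ_le (p := p) (q := q') (q' := q)
          hq.1 hq.2.1 (Or.inl ⟨hgt, hside.mpr hl⟩)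
        omega
      · have hgp : p.1 < q'.1 := lt_of_le_of_ne (not_lt.1 hl) (Ne.symm hxq'p)
        have := count_succ_le (p := p) (q := q) (q' := q')
          hq'.1 hq'.2.1 (Or.inr ⟨hgp, hgt⟩)
        omega

open Classical in
lemma chi_ne_of_mem {k : ℕ} (hk : 1 ≤ k) {S : Finset (ℝ × ℝ)}
    (hx : Set.InjOn Prod.fst (S : Set (ℝ × ℝ))) {p : ℝ × ℝ} (hp : p ∈ S)
    {q : ℝ × ℝ} (hq : q ∈ Nset k S p) :
    chi k hk S p ≠ chi k hk S q := by
  have himg : ((Nset k S p).attach.image (fun q => chi k hk S q.1)).card ≤ 2 * k - 2 := by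
    calc _ ≤ (Nset k S p).attach.card := Finset.card_image_le
      _ = (Nset k S p).card := Finset.card_attach
      _ ≤ 2 * k - 2 := card_Nset_le hk hx hp
  have hne : ((Finset.univ : Finset (Fin (2 * k - 1))) \
      ((Nset k S p).attach.image (fun q => chi k hk S q.1))).Nonempty := by
    rw [← Finset.card_pos]
    have h1 : (Finset.univ : Finset (Fin (2 * k - 1))).card = 2 * k - 1 := by simp
    have h2 := Finset.le_card_sdiff
      ((Nset k S p).attach.image (fun q => chi k hk S q.1))
      (Finset.univ : Finset (Fin (2 * k - 1)))
    omega
  have hmem : chi k hk S p ∈ (Finset.univ : Finset (Fin (2 * k - 1))) \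
      ((Nset k S p).attach.image (fun q => chi k hk S q.1)) := by
    rw [chi, dif_pos hne]
    exact hne.choose_spec
  have hnotmem := (Finset.mem_sdiff.1 hmem).2
  intro heq
  exact hnotmem (Finset.mem_image.2 ⟨⟨q, hq⟩, Finset.mem_attach _ _, heq.symm⟩)

open Classical in
lemma mem_Nset_of_rect {k : ℕ} {S : Finset (ℝ × ℝ)} {a b c : ℝ} {p q : ℝ × ℝ}
    (hp : p ∈ S.filter (InBottomless a b c)) (hq : q ∈ S.filter (InBottomless a b c))
    (hcard : (S.filter (InBottomless a b c)).card ≤ k) (hlt : p.2 < q.2) :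
    p ∈ Nset k S q := by
  obtain ⟨hpS, hpa, hpb, hpc⟩ := Finset.mem_filter.1 hp
  obtain ⟨hqS, hqa, hqb, hqc⟩ := Finset.mem_filter.1 hq
  simp only [Nset, Finset.mem_filter]
  refine ⟨hpS, hlt, ?_⟩
  set T := S.filter (fun r => r.2 < q.2 ∧
    ((p.1 < r.1 ∧ r.1 < q.1) ∨ (q.1 < r.1 ∧ r.1 < p.1))) with hT
  have hpT : p ∉ T := by
    simp only [hT, Finset.mem_filter]
    rintro ⟨-, -, ⟨h1, -⟩ | ⟨-, h2⟩⟩ <;> linarith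
  have hqT : q ∉ T := by
    simp only [hT, Finset.mem_filter]
    rintro ⟨-, h, -⟩; exact lt_irrefl _ h
  have hpq : p ≠ q := by rintro rfl; exact lt_irrefl _ hlt
  have hsub : insert p (insert q T) ⊆ S.filter (InBottomless a b c) := by
    intro r hr
    rcases Finset.mem_insert.1 hr with rfl | hr
    · exact hp
    rcases Finset.mem_insert.1 hr with rfl | hr
    · exact hq
    simp only [hT, Finset.mem_filter] at hr
    obtain ⟨hrS, hry, hrx⟩ := hr
    refine Finset.mem_filter.2 ⟨hrS, ?_, ?_, ?_⟩
    · rcases hrx with ⟨h1, h2⟩ | ⟨h1, h2⟩ <;> linarith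
    · rcases hrx with ⟨h1, h2⟩ | ⟨h1, h2⟩ <;> linarith
    · linarith
  have hcard2 : (insert p (insert q T)).card = T.card + 2 := by
    rw [Finset.card_insert_of_notMem (by simp [hqT, hpT, hpq]),
      Finset.card_insert_of_notMem hqT]
  have := Finset.card_le_card hsub
  omega

theorem bottomless_rainbow_coloring (k : ℕ) (hk : 1 ≤ k)
    (S : Finset (ℝ × ℝ))
    (hx : Set.InjOn Prod.fst (S : Set (ℝ × ℝ)))
    (hy : Set.InjOn Prod.snd (S : Set (ℝ × ℝ))) :
    ∃ χ : ℝ × ℝ → Fin (2 * k - 1), ∀ a b c : ℝ, a ≤ b →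
      (S.filter (InBottomless a b c)).card ≤ k →
      ∀ p ∈ S.filter (InBottomless a b c), ∀ q ∈ S.filter (InBottomless a b c),
        p ≠ q → χ p ≠ χ q := by
  refine ⟨chi k hk S, fun a b c hab hcard p hp q hq hpq => ?_⟩
  have hpS : p ∈ S := (Finset.mem_filter.1 hp).1
  have hqS : q ∈ S := (Finset.mem_filter.1 hq).1
  have hy2 : p.2 ≠ q.2 := fun h => hpq (hy hpS hqS h)
  rcases hy2.lt_or_gt with hlt | hlt
  · exact (chi_ne_of_mem hk hx hqS (mem_Nset_of_rect hp hq hcard hlt)).symm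
  · exact chi_ne_of_mem hk hx hpS (mem_Nset_of_rect hq hp hcard hlt)
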